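/- Let a locally compact group G act on a countable set X with compact stabilizers S_x = {g : g·x = x}. Then there exist finite sets B(x, ℓ) ⊆ X for x ∈ X, ℓ ≥ 1, such that: (a) g·B(x,ℓ) = B(g·x, ℓ) for all g ∈ G; (b) ⋃_{ℓ ≥ 1} B(x,ℓ) = X; and (c) for each x₁ ∈ X and ℓ ≥ 1, the set {x₂ ∈ X : B(x₁,ℓ) ∩ B(x₂,ℓ) ≠ ∅} is finite. -/

import Mathlib

/-- Lemma 4.2: a locally compact group acting transitively and continuously on a
countable discrete set with compact stabilizers admits equivariant "balls"
`B(x,ℓ)` exhausting the set, with finite overlap. -/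
theorem stmt_11 {G X : Type*} [Group G] [TopologicalSpace G] [IsTopologicalGroup G]
    [LocallyCompactSpace G] [Countable X] [MulAction G X]
    [MulAction.IsPretransitive G X]
    (hopen : ∀ x z : X, IsOpen {g : G | g • x = z})
    (hstab : ∀ x : X, IsCompact {g : G | g • x = x}) :
    ∃ B : X → ℕ → Set X,
      (∀ (x : X) (ℓ : ℕ), 1 ≤ ℓ → (B x ℓ).Finite) ∧
      (∀ (g : G) (x : X) (ℓ : ℕ), 1 ≤ ℓ → (g • ·) '' B x ℓ = B (g • x) ℓ) ∧
      (∀ x : X, ⋃ ℓ ∈ {ℓ : ℕ | 1 ≤ ℓ}, B x ℓ = Set.univ) ∧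
      (∀ (x₁ : X) (ℓ : ℕ), 1 ≤ ℓ →
        {x₂ : X | (B x₁ ℓ ∩ B x₂ ℓ).Nonempty}.Finite) := by
  rcases isEmpty_or_nonempty X with hX | hX
  · exact ⟨fun _ _ => ∅, fun _ _ _ => Set.finite_empty,
      fun g x ℓ _ => by simp, fun x => isEmptyElim x, fun x₁ _ _ => isEmptyElim x₁⟩
  -- key finiteness lemma: compact sets have finite orbits of points
  have key : ∀ (K : Set G), IsCompact K → ∀ y : X, ((· • y) '' K).Finite := by
    intro K hK y
    obtain ⟨t, ht⟩ := hK.elim_finite_subcover (fun z : X => {g : G | g • y = z})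
      (fun z => hopen y z) (fun g _ => Set.mem_iUnion.2 ⟨g • y, rfl⟩)
    apply Set.Finite.subset t.finite_toSet
    rintro _ ⟨g, hg, rfl⟩
    obtain ⟨z, hz, hgz⟩ := Set.mem_iUnion₂.1 (ht hg)
    have hgz' : g • y = z := hgz
    show g • y ∈ (t : Set X)
    rw [hgz']
    exact hz
  obtain ⟨e, he⟩ := exists_surjective_nat X
  obtain ⟨x₀⟩ := hX
  set S : Set G := {g : G | g • x₀ = x₀} with hS
  -- the model finite sets
  set C : ℕ → Set X := fun ℓ => insert x₀ (⋃ k ∈ Set.Iic ℓ, (· • e k) '' S) with hC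
  have hCfin : ∀ ℓ, (C ℓ).Finite := by
    intro ℓ
    exact Set.Finite.insert _ ((Set.finite_Iic ℓ).biUnion fun k _ => key S (hstab x₀) (e k))
  -- C ℓ is invariant under the stabilizer S
  have hCinv : ∀ ℓ, ∀ s ∈ S, ∀ y ∈ C ℓ, s • y ∈ C ℓ := by
    intro ℓ s hs y hy
    rcases hy with rfl | hy
    · exact Or.inl hs
    · obtain ⟨k, hk, g, hg, rfl⟩ := Set.mem_iUnion₂.1 hy
      refine Or.inr (Set.mem_iUnion₂.2 ⟨k, hk, s * g, ?_, mul_smul s g (e k)⟩)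
      show (s * g) • x₀ = x₀
      rw [mul_smul, hg]
      exact hs
  -- the construction
  set B : X → ℕ → Set X := fun x ℓ => {y : X | ∃ g : G, g • x₀ = x ∧ g⁻¹ • y ∈ C ℓ} with hB
  -- representation: B x ℓ = g • C ℓ for any g moving x₀ to x
  have hBrep : ∀ (x : X) (ℓ : ℕ) (g : G), g • x₀ = x → B x ℓ = (g • ·) '' C ℓ := by
    intro x ℓ g hg
    ext y
    constructor
    · rintro ⟨g', hg', hy⟩
      refine ⟨g⁻¹ • y, ?_, by simp⟩
      have hmem : g⁻¹ * g' ∈ S := by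
        show (g⁻¹ * g') • x₀ = x₀
        rw [mul_smul, hg', ← hg, inv_smul_smul]
      have := hCinv ℓ _ hmem _ hy
      rwa [← mul_smul, mul_inv_cancel_right] at this
    · rintro ⟨c, hc, rfl⟩
      exact ⟨g, hg, by simpa using hc⟩
  refine ⟨B, ?_, ?_, ?_, ?_⟩
  · -- finiteness
    intro x ℓ _
    obtain ⟨g, hg⟩ := MulAction.exists_smul_eq G x₀ x
    rw [hBrep x ℓ g hg]
    exact (hCfin ℓ).image _
  · -- equivariance
    intro h x ℓ _
    ext y
    constructor
    · rintro ⟨y', ⟨g, hg, hy'⟩, rfl⟩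
      refine ⟨h * g, by rw [mul_smul, hg], ?_⟩
      rwa [mul_inv_rev, mul_smul, inv_smul_smul]
    · rintro ⟨g, hg, hy⟩
      refine ⟨h⁻¹ • y, ⟨h⁻¹ * g, ?_, ?_⟩, by simp⟩
      · rw [mul_smul, hg, inv_smul_smul]
      · show (h⁻¹ * g)⁻¹ • h⁻¹ • y ∈ C ℓ
        rw [mul_inv_rev, inv_inv, mul_smul, smul_inv_smul]
        exact hy
  · -- coverage
    intro x
    apply Set.eq_univ_of_forall
    intro y
    obtain ⟨g, hg⟩ := MulAction.exists_smul_eq G x₀ x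
    obtain ⟨k, hk⟩ := he (g⁻¹ • y)
    refine Set.mem_biUnion (show (1 : ℕ) ≤ max k 1 from le_max_right _ _) ?_
    exact ⟨g, hg, Or.inr (Set.mem_iUnion₂.2 ⟨k, Set.mem_Iic.2 (le_max_left k 1),
      ⟨1, one_smul G x₀, by simpa using hk⟩⟩)⟩
  · -- finite overlap
    intro x₁ ℓ _
    obtain ⟨g₁, hg₁⟩ := MulAction.exists_smul_eq G x₀ x₁
    -- any overlapping x₂ lies in g₁ • ((· • x₀) '' {h | h • c' = c}) for some c, c' ∈ C ℓ
    have hsub : {x₂ : X | (B x₁ ℓ ∩ B x₂ ℓ).Nonempty} ⊆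
        ⋃ c ∈ C ℓ, ⋃ c' ∈ C ℓ, (g₁ • ·) '' ((· • x₀) '' {h : G | h • c' = c}) := by
      rintro x₂ ⟨y, hy₁, hy₂⟩
      rw [hBrep x₁ ℓ g₁ hg₁] at hy₁
      obtain ⟨c, hc, rfl⟩ := hy₁
      obtain ⟨g₂, hg₂, hc'⟩ := hy₂
      refine Set.mem_iUnion₂.2 ⟨c, hc, Set.mem_iUnion₂.2 ⟨g₂⁻¹ • g₁ • c, hc', ?_⟩⟩
      refine ⟨(g₁⁻¹ * g₂) • x₀, ⟨g₁⁻¹ * g₂, ?_, rfl⟩, ?_⟩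
      · show (g₁⁻¹ * g₂) • (g₂⁻¹ • g₁ • c) = c
        rw [mul_smul, smul_inv_smul, inv_smul_smul]
      · show g₁ • (g₁⁻¹ * g₂) • x₀ = x₂
        rw [mul_smul, smul_inv_smul, hg₂]
    refine Set.Finite.subset ?_ hsub
    refine (hCfin ℓ).biUnion fun c _ => (hCfin ℓ).biUnion fun c' _ => Set.Finite.image _ ?_
    -- finiteness of the transporter orbit
    rcases Set.eq_empty_or_nonempty {h : G | h • c' = c} with hT | ⟨h₀, hh₀⟩
    · rw [hT]; simp
    · have : (· • x₀) '' {h : G | h • c' = c} ⊆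
          (h₀ • ·) '' ((· • x₀) '' {g : G | g • c' = c'}) := by
        rintro _ ⟨h, hh, rfl⟩
        refine ⟨(h₀⁻¹ * h) • x₀, ⟨h₀⁻¹ * h, ?_, rfl⟩, ?_⟩
        · show (h₀⁻¹ * h) • c' = c'
          rw [mul_smul, hh, ← hh₀, inv_smul_smul]
        · show h₀ • (h₀⁻¹ * h) • x₀ = h • x₀
          rw [← mul_smul, mul_inv_cancel_left]
      exact Set.Finite.subset ((key _ (hstab c') x₀).image _) this
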